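/- arXiv:2203.05472 — 3 statements merged into one kernel-verified Lean document; each statement's English description precedes it below -/
import Mathlib

section
/- Let h ∈ (0,1) and let ψ : ℝ → ℝ be continuously differentiable with |ψ(x)| ≤ C₀(1+|x|)^{−4} and |ψ'(x)| ≤ C₀(1+|x|)^{−4} for some C₀ > 0 and all x ∈ ℝ. Then there exists C > 0 such that for all s, t ∈ ℝ, ∑_{j=0}^{∞} ∑_{k∈ℤ} 2^{−2hj}·(ψ(2^j t − k) − ψ(2^j s − k))² ≤ C·|s−t|^{2h}. (This double sum equals the variance E[(f_h(t)−f_h(s))²] of the Gaussian random wavelet series f_h with coefficients ξ_{j,k} 2^{−hj}.) -/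
open Real Set Finset


noncomputable def wfun (x : ℝ) : ℝ := ((1 + |x|) ^ 4)⁻¹

lemma wfun_pos (x : ℝ) : 0 < wfun x := by
  unfold wfun; positivity

lemma wfun_le_one (x : ℝ) : wfun x ≤ 1 := by
  rw [wfun]
  have h1 : (1:ℝ) ≤ (1 + |x|) ^ 4 := one_le_pow₀ (by linarith [abs_nonneg x])
  exact inv_le_one_of_one_le₀ h1

lemma zpow_eq_wfun (x : ℝ) : (1 + |x|) ^ (-4 : ℤ) = wfun x := by
  rw [wfun, zpow_neg]
  norm_cast

lemma wfun_cmp {x y : ℝ} (hxy : 1 + |y| ≤ 2 * (1 + |x|)) : wfun x ≤ 16 * wfun y := by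
  have h1 : (0:ℝ) < (1 + |x|) ^ 4 := by positivity
  have h2 : (0:ℝ) < (1 + |y|) ^ 4 := by positivity
  have key : (1 + |y|) ^ 4 ≤ 16 * (1 + |x|) ^ 4 := by
    calc (1 + |y|) ^ 4 ≤ (2 * (1 + |x|)) ^ 4 := by
          apply pow_le_pow_left₀ (by positivity) hxy
      _ = 16 * (1 + |x|) ^ 4 := by ring
  rw [wfun, wfun]
  calc ((1+|x|)^4)⁻¹ = ((1+|y|)^4 * ((1+|y|)^4)⁻¹) * ((1+|x|)^4)⁻¹ := by
        rw [mul_inv_cancel₀ h2.ne', one_mul]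
    _ ≤ (16*(1+|x|)^4 * ((1+|y|)^4)⁻¹) * ((1+|x|)^4)⁻¹ := by
        apply mul_le_mul_of_nonneg_right (mul_le_mul_of_nonneg_right key (by positivity)) (by positivity)
    _ = 16 * ((1+|y|)^4)⁻¹ * ((1+|x|)^4 * ((1+|x|)^4)⁻¹) := by ring
    _ = 16 * ((1+|y|)^4)⁻¹ := by rw [mul_inv_cancel₀ h1.ne', mul_one]




lemma summable_wfun_nat : Summable (fun n : ℕ => wfun n) := by
  have h2 : Summable (fun n : ℕ => ((n:ℝ) ^ 2)⁻¹) := Real.summable_nat_pow_inv.mpr one_lt_two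
  have h3 : Summable (fun n : ℕ => (((n:ℝ) + 1) ^ 2)⁻¹) := by
    have := (summable_nat_add_iff 1).mpr h2
    apply this.congr
    intro n
    push_cast
    ring_nf
  apply h3.of_nonneg_of_le (fun n => (wfun_pos _).le)
  intro n
  rw [wfun, abs_of_nonneg (Nat.cast_nonneg n)]
  apply inv_anti₀
  · positivity
  · have hx : (0:ℝ) ≤ (n:ℝ) := Nat.cast_nonneg n
    calc ((n:ℝ) + 1)^2 ≤ ((n:ℝ) + 1)^4 := by
          nlinarith [sq_nonneg ((n:ℝ)+1), mul_nonneg (sq_nonneg ((n:ℝ)+1))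
            (by nlinarith : (0:ℝ) ≤ (n:ℝ)^2 + 2*n)]
      _ = (1 + (n:ℝ))^4 := by ring

lemma summable_wfun_int : Summable (fun m : ℤ => wfun m) := by
  apply Summable.of_nat_of_neg
  · exact summable_wfun_nat.congr (fun n => by norm_num)
  · apply summable_wfun_nat.congr
    intro n
    simp [wfun]


noncomputable def Bconst : ℝ := ∑' m : ℤ, wfun m

lemma Bconst_nonneg : 0 ≤ Bconst :=
  tsum_nonneg (fun m => (wfun_pos _).le)

lemma summable_wfun_int_shift (n : ℤ) : Summable (fun k : ℤ => wfun ((n:ℝ) - k)) := by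
  have := summable_wfun_int.comp_injective (Equiv.subLeft n).injective
  apply this.congr
  intro k
  show wfun (((n - k : ℤ) : ℝ)) = wfun ((n:ℝ) - k)
  congr 1
  push_cast
  ring

lemma tsum_wfun_int_shift (n : ℤ) : ∑' k : ℤ, wfun ((n:ℝ) - k) = Bconst := by
  rw [Bconst]
  rw [← (Equiv.subLeft n).tsum_eq (fun k : ℤ => wfun ((n:ℝ) - k))]
  apply tsum_congr
  intro m
  show wfun ((n:ℝ) - ((n - m : ℤ) : ℝ)) = wfun (m:ℝ)
  congr 1
  push_cast
  ring

lemma floor_cmp (x : ℝ) (k : ℤ) : 1 + |(⌊x⌋:ℝ) - k| ≤ 2 * (1 + |x - k|) := by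
  have h1 : |(⌊x⌋:ℝ) - k| ≤ |(⌊x⌋:ℝ) - x| + |x - k| := by
    calc |(⌊x⌋:ℝ) - k| = |((⌊x⌋:ℝ) - x) + (x - k)| := by ring_nf
      _ ≤ _ := abs_add_le _ _
  have h2 : |(⌊x⌋:ℝ) - x| ≤ 1 := by
    rw [abs_le]
    constructor <;> [linarith [Int.lt_floor_add_one x]; linarith [Int.floor_le x]]
  have h3 : 0 ≤ |x - k| := abs_nonneg _
  linarith

lemma summable_wfun_sub (x : ℝ) : Summable (fun k : ℤ => wfun (x - k)) := by
  apply Summable.of_nonneg_of_le (fun k => (wfun_pos _).le)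
    (fun k => wfun_cmp (floor_cmp x k))
  exact (summable_wfun_int_shift ⌊x⌋).mul_left 16

lemma tsum_wfun_sub_le (x : ℝ) : ∑' k : ℤ, wfun (x - k) ≤ 16 * Bconst := by
  calc ∑' k : ℤ, wfun (x - k) ≤ ∑' k : ℤ, 16 * wfun ((⌊x⌋:ℝ) - k) := by
        apply Summable.tsum_le_tsum (fun k => wfun_cmp (floor_cmp x k)) (summable_wfun_sub x)
          ((summable_wfun_int_shift ⌊x⌋).mul_left 16)
    _ = 16 * ∑' k : ℤ, wfun ((⌊x⌋:ℝ) - k) := tsum_mul_left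
    _ = 16 * Bconst := by rw [tsum_wfun_int_shift]




section psi
variable {ψ : ℝ → ℝ} {C₀ : ℝ}

lemma sq_psi_le (hd : ∀ x : ℝ, |ψ x| ≤ C₀ * (1 + |x|) ^ (-4 : ℤ)) (hC₀ : 0 < C₀) (x : ℝ) :
    (ψ x) ^ 2 ≤ C₀ ^ 2 * wfun x := by
  have h1 : |ψ x| ≤ C₀ * wfun x := by rw [← zpow_eq_wfun]; exact hd x
  have h2 := wfun_le_one x
  have h3 := wfun_pos x
  nlinarith [abs_nonneg (ψ x), sq_abs (ψ x)]

lemma diff_sq_le (hd : ∀ x : ℝ, |ψ x| ≤ C₀ * (1 + |x|) ^ (-4 : ℤ)) (hC₀ : 0 < C₀)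
    (p q : ℝ) : (ψ p - ψ q) ^ 2 ≤ 2 * C₀ ^ 2 * (wfun p + wfun q) := by
  have h1 := sq_psi_le hd hC₀ p
  have h2 := sq_psi_le hd hC₀ q
  nlinarith [sq_nonneg (ψ p + ψ q)]

lemma inner_summable (hd : ∀ x : ℝ, |ψ x| ≤ C₀ * (1 + |x|) ^ (-4 : ℤ)) (hC₀ : 0 < C₀)
    (a b : ℝ) : Summable (fun k : ℤ => (ψ (a - k) - ψ (b - k)) ^ 2) := by
  apply Summable.of_nonneg_of_le (fun k : ℤ => sq_nonneg _)
    (fun k : ℤ => diff_sq_le hd hC₀ (a - k) (b - k))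
  exact ((summable_wfun_sub a).add (summable_wfun_sub b)).mul_left _

lemma inner_le_one (hd : ∀ x : ℝ, |ψ x| ≤ C₀ * (1 + |x|) ^ (-4 : ℤ)) (hC₀ : 0 < C₀)
    (a b : ℝ) : ∑' k : ℤ, (ψ (a - k) - ψ (b - k)) ^ 2 ≤ 64 * C₀ ^ 2 * Bconst := by
  calc ∑' k : ℤ, (ψ (a - k) - ψ (b - k)) ^ 2
      ≤ ∑' k : ℤ, 2 * C₀ ^ 2 * (wfun (a - k) + wfun (b - k)) := by
        apply Summable.tsum_le_tsum (fun k : ℤ => diff_sq_le hd hC₀ (a - k) (b - k))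
          (inner_summable hd hC₀ a b)
          (((summable_wfun_sub a).add (summable_wfun_sub b)).mul_left _)
    _ = 2 * C₀ ^ 2 * ((∑' k : ℤ, wfun (a - k)) + ∑' k : ℤ, wfun (b - k)) := by
        rw [tsum_mul_left, Summable.tsum_add (summable_wfun_sub a) (summable_wfun_sub b)]
    _ ≤ 2 * C₀ ^ 2 * (16 * Bconst + 16 * Bconst) := by
        apply mul_le_mul_of_nonneg_left (add_le_add (tsum_wfun_sub_le a) (tsum_wfun_sub_le b))
          (by positivity)
    _ = 64 * C₀ ^ 2 * Bconst := by ring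

lemma deriv_bound_on_uIcc (hψ : ContDiff ℝ 1 ψ)
    (hd : ∀ x : ℝ, |deriv ψ x| ≤ C₀ * (1 + |x|) ^ (-4 : ℤ)) (hC₀ : 0 < C₀)
    {p q : ℝ} (hpq : |p - q| ≤ 1) :
    |ψ p - ψ q| ≤ 16 * C₀ * wfun p * |p - q| := by
  have hdiff : ∀ x ∈ uIcc p q, DifferentiableAt ℝ ψ x :=
    fun x _ => (hψ.differentiable one_ne_zero).differentiableAt
  have hbound : ∀ x ∈ uIcc p q, ‖deriv ψ x‖ ≤ 16 * C₀ * wfun p := by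
    intro x hx
    have h1 : |deriv ψ x| ≤ C₀ * wfun x := by rw [← zpow_eq_wfun]; exact hd x
    have h2 : wfun x ≤ 16 * wfun p := by
      apply wfun_cmp
      have hdist : |x - p| ≤ |p - q| := by
        have := Real.dist_le_of_mem_uIcc hx (left_mem_uIcc (a := p) (b := q))
        simpa [Real.dist_eq] using this
      have : |p| ≤ |p - x| + |x| := by
        calc |p| = |(p - x) + x| := by ring_nf
          _ ≤ |p - x| + |x| := abs_add_le _ _
      have hxp : |p - x| ≤ 1 := by rw [abs_sub_comm]; linarith
      linarith [abs_nonneg x]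
    rw [Real.norm_eq_abs]
    calc |deriv ψ x| ≤ C₀ * wfun x := h1
      _ ≤ C₀ * (16 * wfun p) := by
          apply mul_le_mul_of_nonneg_left h2 hC₀.le
      _ = 16 * C₀ * wfun p := by ring
  have := (convex_uIcc p q).norm_image_sub_le_of_norm_deriv_le hdiff hbound
    (right_mem_uIcc (a := p) (b := q)) (left_mem_uIcc (a := p) (b := q))
  simpa [Real.norm_eq_abs] using this

lemma inner_le_sq (hψ : ContDiff ℝ 1 ψ)
    (hd : ∀ x : ℝ, |ψ x| ≤ C₀ * (1 + |x|) ^ (-4 : ℤ))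
    (hd' : ∀ x : ℝ, |deriv ψ x| ≤ C₀ * (1 + |x|) ^ (-4 : ℤ)) (hC₀ : 0 < C₀)
    {a b : ℝ} (hab : |a - b| ≤ 1) :
    ∑' k : ℤ, (ψ (a - k) - ψ (b - k)) ^ 2 ≤ 4096 * C₀ ^ 2 * Bconst * (a - b) ^ 2 := by
  have key : ∀ k : ℤ, (ψ (a - k) - ψ (b - k)) ^ 2 ≤
      256 * C₀ ^ 2 * (a - b) ^ 2 * wfun (a - k) := by
    intro k
    have hpq : |(a - k) - (b - k)| ≤ 1 := by
      have : (a - k) - (b - k) = a - b := by ring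
      rw [this]; exact hab
    have h1 := deriv_bound_on_uIcc hψ hd' hC₀ hpq
    have h2 : (a - k) - (b - k) = a - b := by ring
    rw [h2] at h1
    have h3 := wfun_pos (a - k)
    have h4 := wfun_le_one (a - k)
    have h5 : (ψ (a - k) - ψ (b - k)) ^ 2 ≤ (16 * C₀ * wfun (a - k) * |a - b|) ^ 2 := by
      rw [← sq_abs]
      apply pow_le_pow_left₀ (abs_nonneg _) h1
    calc (ψ (a - k) - ψ (b - k)) ^ 2 ≤ (16 * C₀ * wfun (a - k) * |a - b|) ^ 2 := h5
      _ = 256 * C₀ ^ 2 * |a - b| ^ 2 * (wfun (a - k) * wfun (a - k)) := by ring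
      _ = 256 * C₀ ^ 2 * (a - b) ^ 2 * (wfun (a - k) * wfun (a - k)) := by rw [sq_abs]
      _ ≤ 256 * C₀ ^ 2 * (a - b) ^ 2 * wfun (a - k) := by
          apply mul_le_mul_of_nonneg_left _ (by positivity)
          nlinarith
  calc ∑' k : ℤ, (ψ (a - k) - ψ (b - k)) ^ 2
      ≤ ∑' k : ℤ, 256 * C₀ ^ 2 * (a - b) ^ 2 * wfun (a - k) := by
        apply Summable.tsum_le_tsum key (inner_summable hd hC₀ a b)
          ((summable_wfun_sub a).mul_left _)
    _ = 256 * C₀ ^ 2 * (a - b) ^ 2 * ∑' k : ℤ, wfun (a - k) := tsum_mul_left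
    _ ≤ 256 * C₀ ^ 2 * (a - b) ^ 2 * (16 * Bconst) := by
        apply mul_le_mul_of_nonneg_left (tsum_wfun_sub_le a) (by positivity)
    _ = 4096 * C₀ ^ 2 * Bconst * (a - b) ^ 2 := by ring

end psi




set_option maxHeartbeats 1000000 in
theorem stmt_5 (h : ℝ) (hh : h ∈ Set.Ioo (0 : ℝ) 1) (ψ : ℝ → ℝ) (hψ : ContDiff ℝ 1 ψ)
    (C₀ : ℝ) (hC₀ : 0 < C₀)
    (hdecay : ∀ x : ℝ, |ψ x| ≤ C₀ * (1 + |x|) ^ (-4 : ℤ) ∧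
      |deriv ψ x| ≤ C₀ * (1 + |x|) ^ (-4 : ℤ)) :
    ∃ C : ℝ, 0 < C ∧ ∀ s t : ℝ,
      (∑' j : ℕ, ∑' k : ℤ, (2 : ℝ) ^ (-(2 * h * (j : ℝ))) *
        (ψ ((2 : ℝ) ^ j * t - (k : ℝ)) - ψ ((2 : ℝ) ^ j * s - (k : ℝ))) ^ 2)
        ≤ C * |s - t| ^ (2 * h) := by
  obtain ⟨hh0, hh1⟩ := hh
  have hd : ∀ x : ℝ, |ψ x| ≤ C₀ * (1 + |x|) ^ (-4 : ℤ) := fun x => (hdecay x).1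
  have hd' : ∀ x : ℝ, |deriv ψ x| ≤ C₀ * (1 + |x|) ^ (-4 : ℤ) := fun x => (hdecay x).2
  set K₁ : ℝ := 64 * C₀ ^ 2 * Bconst with hK₁def
  set K₂ : ℝ := 4096 * C₀ ^ 2 * Bconst with hK₂def
  have hK₁0 : 0 ≤ K₁ := mul_nonneg (by positivity) Bconst_nonneg
  have hK₂0 : 0 ≤ K₂ := mul_nonneg (by positivity) Bconst_nonneg
  set r : ℝ := (2 : ℝ) ^ (-(2 * h)) with hrdef
  have hr0 : 0 < r := Real.rpow_pos_of_pos two_pos _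
  have hr1 : r < 1 := Real.rpow_lt_one_of_one_lt_of_neg one_lt_two (by linarith)
  set q : ℝ := 4 * r with hqdef
  have h22 : (2:ℝ) ^ (2:ℝ) = 4 := by
    have h' := Real.rpow_natCast (2:ℝ) 2
    rw [Nat.cast_ofNat] at h'
    rw [h']
    norm_num
  have hq1 : 1 < q := by
    have hlt : (2:ℝ) ^ (-2:ℝ) < r := by
      rw [hrdef]
      exact Real.rpow_lt_rpow_of_exponent_lt one_lt_two (by linarith)
    have h4 : (2:ℝ) ^ (-2:ℝ) = 4⁻¹ := by
      rw [show (-2:ℝ) = -(2:ℝ) by ring, Real.rpow_neg (by norm_num), h22]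
    rw [hqdef]
    rw [h4] at hlt
    nlinarith
  have hq_eq : q = (2:ℝ) ^ ((2:ℝ) - 2 * h) := by
    rw [show (2:ℝ) - 2*h = 2 + (-(2*h)) by ring, Real.rpow_add two_pos, h22, hqdef, hrdef]
  have hgeo : Summable (fun j : ℕ => r ^ j) := summable_geometric_of_lt_one hr0.le hr1
  have hinv1 : 0 ≤ (1 - r)⁻¹ := inv_nonneg.mpr (by linarith)
  have hinv2 : 0 ≤ (q - 1)⁻¹ := inv_nonneg.mpr (by linarith)
  refine ⟨K₁ * (1 - r)⁻¹ + 4 * K₂ * (q - 1)⁻¹ + 1, ?_, ?_⟩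
  · have h1 : 0 ≤ K₁ * (1 - r)⁻¹ := mul_nonneg hK₁0 hinv1
    have h2 : 0 ≤ 4 * K₂ * (q - 1)⁻¹ := mul_nonneg (by linarith) hinv2
    linarith
  intro s t
  set δ : ℝ := |s - t| with hδdef
  have hδ0 : 0 ≤ δ := abs_nonneg _
  set I : ℕ → ℝ := fun j => ∑' k : ℤ, (ψ ((2:ℝ) ^ j * t - (k:ℝ)) - ψ ((2:ℝ) ^ j * s - (k:ℝ))) ^ 2
    with hIdef
  have hc : ∀ j : ℕ, (2:ℝ) ^ (-(2 * h * (j:ℝ))) = r ^ j := by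
    intro j
    rw [hrdef, ← Real.rpow_natCast ((2:ℝ) ^ (-(2*h))) j,
      ← Real.rpow_mul (by norm_num : (0:ℝ) ≤ 2)]
    congr 1
    ring
  have goal_eq : (∑' j : ℕ, ∑' k : ℤ, (2 : ℝ) ^ (-(2 * h * (j : ℝ))) *
      (ψ ((2 : ℝ) ^ j * t - (k : ℝ)) - ψ ((2 : ℝ) ^ j * s - (k : ℝ))) ^ 2)
      = ∑' j : ℕ, r ^ j * I j := by
    apply tsum_congr
    intro j
    rw [tsum_mul_left, hc j, hIdef]
  rw [goal_eq]
  have hInn : ∀ j : ℕ, 0 ≤ I j := fun j => tsum_nonneg fun k => sq_nonneg _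
  have hI1 : ∀ j : ℕ, I j ≤ K₁ := fun j => inner_le_one hd hC₀ _ _
  have habs : ∀ j : ℕ, |(2:ℝ) ^ j * t - (2:ℝ) ^ j * s| = 2 ^ j * δ := by
    intro j
    rw [show (2:ℝ) ^ j * t - 2 ^ j * s = 2 ^ j * (t - s) by ring, abs_mul,
      abs_of_pos (pow_pos two_pos j), abs_sub_comm, hδdef]
  have hI2 : ∀ j : ℕ, (2:ℝ) ^ j * δ ≤ 1 → I j ≤ K₂ * ((2:ℝ) ^ j * δ) ^ 2 := by
    intro j hj
    have hab : |(2:ℝ) ^ j * t - (2:ℝ) ^ j * s| ≤ 1 := by rw [habs j]; exact hj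
    have := inner_le_sq hψ hd hd' hC₀ hab
    calc I j ≤ 4096 * C₀ ^ 2 * Bconst * ((2:ℝ) ^ j * t - (2:ℝ) ^ j * s) ^ 2 := this
      _ = K₂ * |(2:ℝ) ^ j * t - (2:ℝ) ^ j * s| ^ 2 := by rw [sq_abs, hK₂def]
      _ = K₂ * ((2:ℝ) ^ j * δ) ^ 2 := by rw [habs j]
  have hbd : ∀ j : ℕ, r ^ j * I j ≤ K₁ * r ^ j := by
    intro j
    rw [mul_comm K₁ (r ^ j)]
    exact mul_le_mul_of_nonneg_left (hI1 j) (pow_nonneg hr0.le j)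
  have Souter : Summable (fun j : ℕ => r ^ j * I j) :=
    Summable.of_nonneg_of_le (fun j => mul_nonneg (pow_nonneg hr0.le j) (hInn j)) hbd
      (hgeo.mul_left K₁)
  by_cases hδz : δ = 0
  · have hst : s = t := by
      have := abs_eq_zero.mp (hδdef ▸ hδz)
      linarith [sub_eq_zero.mp this]
    have hIz : ∀ j : ℕ, I j = 0 := by
      intro j
      rw [hIdef]
      simp [hst]
    rw [tsum_congr (fun j => by rw [hIz j, mul_zero] : ∀ j : ℕ, r ^ j * I j = 0), tsum_zero]
    have h1 : 0 ≤ K₁ * (1 - r)⁻¹ := mul_nonneg hK₁0 hinv1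
    have h2 : 0 ≤ 4 * K₂ * (q - 1)⁻¹ := mul_nonneg (by linarith) hinv2
    exact mul_nonneg (by linarith) (Real.rpow_nonneg hδ0 _)
  have hδpos : 0 < δ := lt_of_le_of_ne hδ0 (Ne.symm hδz)
  have hrp0 : 0 ≤ δ ^ (2 * h) := Real.rpow_nonneg hδ0 _
  have h1 : 0 ≤ K₁ * (1 - r)⁻¹ := mul_nonneg hK₁0 hinv1
  have h2 : 0 ≤ 4 * K₂ * (q - 1)⁻¹ := mul_nonneg (by linarith) hinv2
  by_cases hδ1 : 1 ≤ δ
  · -- large increment case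
    have hone : (1:ℝ) ≤ δ ^ (2 * h) := Real.one_le_rpow hδ1 (by linarith)
    calc ∑' j : ℕ, r ^ j * I j ≤ ∑' j : ℕ, K₁ * r ^ j :=
          Summable.tsum_le_tsum hbd Souter (hgeo.mul_left K₁)
      _ = K₁ * ∑' j : ℕ, r ^ j := tsum_mul_left
      _ = K₁ * (1 - r)⁻¹ := by rw [tsum_geometric_of_lt_one hr0.le hr1]
      _ ≤ (K₁ * (1 - r)⁻¹) * δ ^ (2 * h) := le_mul_of_one_le_right h1 hone
      _ ≤ (K₁ * (1 - r)⁻¹ + 4 * K₂ * (q - 1)⁻¹ + 1) * δ ^ (2 * h) := by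
          apply mul_le_mul_of_nonneg_right _ hrp0
          linarith
  · -- small increment case
    push_neg at hδ1
    set j₀ : ℕ := ⌈Real.logb 2 δ⁻¹⌉₊ with hj₀def
    have hδinv1 : 1 ≤ δ⁻¹ := (one_le_inv₀ hδpos).mpr hδ1.le
    have hlog0 : 0 ≤ Real.logb 2 δ⁻¹ := Real.logb_nonneg one_lt_two hδinv1
    have hlow : δ⁻¹ ≤ (2:ℝ) ^ j₀ := by
      calc δ⁻¹ = 2 ^ Real.logb 2 δ⁻¹ :=
            (Real.rpow_logb two_pos (by norm_num) (by positivity)).symm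
        _ ≤ 2 ^ ((j₀:ℕ):ℝ) := Real.rpow_le_rpow_of_exponent_le one_le_two (Nat.le_ceil _)
        _ = 2 ^ j₀ := Real.rpow_natCast 2 j₀
    have hhigh : (2:ℝ) ^ j₀ ≤ 2 * δ⁻¹ := by
      calc (2:ℝ) ^ j₀ = 2 ^ ((j₀:ℕ):ℝ) := (Real.rpow_natCast 2 j₀).symm
        _ ≤ 2 ^ (Real.logb 2 δ⁻¹ + 1) := by
            apply Real.rpow_le_rpow_of_exponent_le one_le_two
            have := Nat.ceil_lt_add_one hlog0
            rw [← hj₀def] at this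
            linarith
        _ = 2 ^ Real.logb 2 δ⁻¹ * 2 ^ (1:ℝ) := Real.rpow_add two_pos _ _
        _ = 2 * δ⁻¹ := by
            rw [Real.rpow_logb two_pos (by norm_num) (by positivity), Real.rpow_one]
            ring
    rw [← Summable.sum_add_tsum_nat_add j₀ Souter]
    -- tail estimate
    have hrj₀ : r ^ j₀ ≤ δ ^ (2 * h) := by
      have e1 : r ^ j₀ = ((2:ℝ) ^ j₀) ^ (-(2 * h)) := by
        rw [hrdef, ← Real.rpow_natCast ((2:ℝ) ^ (-(2*h))) j₀,
          ← Real.rpow_natCast (2:ℝ) j₀,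
          ← Real.rpow_mul (by norm_num : (0:ℝ) ≤ 2),
          ← Real.rpow_mul (by norm_num : (0:ℝ) ≤ 2)]
        congr 1
        ring
      rw [e1]
      calc ((2:ℝ) ^ j₀) ^ (-(2 * h)) ≤ (δ⁻¹) ^ (-(2 * h)) :=
            Real.rpow_le_rpow_of_nonpos (by positivity) hlow (by linarith)
        _ = δ ^ (2 * h) := by
            rw [Real.inv_rpow hδ0, ← Real.rpow_neg hδ0, neg_neg]
    have Htail : (∑' i : ℕ, r ^ (i + j₀) * I (i + j₀)) ≤ (K₁ * (1 - r)⁻¹) * δ ^ (2 * h) := by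
      have htb : ∀ i : ℕ, r ^ (i + j₀) * I (i + j₀) ≤ (K₁ * r ^ j₀) * r ^ i := by
        intro i
        calc r ^ (i + j₀) * I (i + j₀) ≤ K₁ * r ^ (i + j₀) := hbd _
          _ = (K₁ * r ^ j₀) * r ^ i := by rw [pow_add]; ring
      calc (∑' i : ℕ, r ^ (i + j₀) * I (i + j₀)) ≤ ∑' i : ℕ, (K₁ * r ^ j₀) * r ^ i :=
            Summable.tsum_le_tsum htb ((summable_nat_add_iff j₀).mpr Souter) (hgeo.mul_left _)
        _ = (K₁ * r ^ j₀) * (1 - r)⁻¹ := by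
            rw [tsum_mul_left, tsum_geometric_of_lt_one hr0.le hr1]
        _ ≤ (K₁ * δ ^ (2 * h)) * (1 - r)⁻¹ := by
            apply mul_le_mul_of_nonneg_right _ hinv1
            exact mul_le_mul_of_nonneg_left hrj₀ hK₁0
        _ = (K₁ * (1 - r)⁻¹) * δ ^ (2 * h) := by ring
    -- head estimate
    have hqj₀ : q ^ j₀ ≤ 4 * (δ⁻¹) ^ ((2:ℝ) - 2 * h) := by
      have e3 : q ^ j₀ = ((2:ℝ) ^ j₀) ^ ((2:ℝ) - 2 * h) := by
        rw [hq_eq, ← Real.rpow_natCast ((2:ℝ) ^ ((2:ℝ) - 2*h)) j₀,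
          ← Real.rpow_natCast (2:ℝ) j₀,
          ← Real.rpow_mul (by norm_num : (0:ℝ) ≤ 2),
          ← Real.rpow_mul (by norm_num : (0:ℝ) ≤ 2)]
        congr 1
        ring
      rw [e3]
      calc ((2:ℝ) ^ j₀) ^ ((2:ℝ) - 2 * h) ≤ (2 * δ⁻¹) ^ ((2:ℝ) - 2 * h) :=
            Real.rpow_le_rpow (by positivity) hhigh (by linarith)
        _ = 2 ^ ((2:ℝ) - 2 * h) * (δ⁻¹) ^ ((2:ℝ) - 2 * h) :=
            Real.mul_rpow (by norm_num) (by positivity)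
        _ ≤ 4 * (δ⁻¹) ^ ((2:ℝ) - 2 * h) := by
            apply mul_le_mul_of_nonneg_right _ (by positivity)
            calc (2:ℝ) ^ ((2:ℝ) - 2 * h) ≤ 2 ^ (2:ℝ) :=
                  Real.rpow_le_rpow_of_exponent_le one_le_two (by linarith)
              _ = 4 := h22
    have e4 : δ ^ (2:ℕ) * (δ⁻¹) ^ ((2:ℝ) - 2 * h) = δ ^ (2 * h) := by
      rw [Real.inv_rpow hδ0, ← Real.rpow_neg hδ0, ← Real.rpow_natCast δ 2,
        ← Real.rpow_add hδpos]
      congr 1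
      push_cast
      ring
    have Hhead : (∑ j ∈ Finset.range j₀, r ^ j * I j) ≤ (4 * K₂ * (q - 1)⁻¹) * δ ^ (2 * h) := by
      have hhb : ∀ j ∈ Finset.range j₀, r ^ j * I j ≤ (K₂ * δ ^ (2:ℕ)) * q ^ j := by
        intro j hj
        have hjlt : j < j₀ := Finset.mem_range.mp hj
        have h2j : (2:ℝ) ^ (j + 1) ≤ (2:ℝ) ^ j₀ :=
          pow_le_pow_right₀ one_le_two (by omega)
        have h2jb : (2:ℝ) ^ j ≤ δ⁻¹ := by
          have : (2:ℝ) ^ j * 2 ≤ 2 * δ⁻¹ := by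
            rw [mul_comm, ← pow_succ']
            calc (2:ℝ) ^ (j + 1) ≤ (2:ℝ) ^ j₀ := h2j
              _ ≤ 2 * δ⁻¹ := hhigh
          linarith
        have hj1 : (2:ℝ) ^ j * δ ≤ 1 := by
          calc (2:ℝ) ^ j * δ ≤ δ⁻¹ * δ := mul_le_mul_of_nonneg_right h2jb hδ0
            _ = 1 := inv_mul_cancel₀ hδpos.ne'
        have e2 : ((2:ℝ) ^ j) ^ 2 = 4 ^ j := by
          rw [← pow_mul, mul_comm, pow_mul]
          norm_num
        calc r ^ j * I j ≤ r ^ j * (K₂ * ((2:ℝ) ^ j * δ) ^ 2) :=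
              mul_le_mul_of_nonneg_left (hI2 j hj1) (pow_nonneg hr0.le j)
          _ = (K₂ * δ ^ (2:ℕ)) * (4 ^ j * r ^ j) := by rw [mul_pow, e2]; ring
          _ = (K₂ * δ ^ (2:ℕ)) * q ^ j := by rw [hqdef, mul_pow]
      calc (∑ j ∈ Finset.range j₀, r ^ j * I j)
          ≤ ∑ j ∈ Finset.range j₀, (K₂ * δ ^ (2:ℕ)) * q ^ j := Finset.sum_le_sum hhb
        _ = (K₂ * δ ^ (2:ℕ)) * ∑ j ∈ Finset.range j₀, q ^ j := by rw [Finset.mul_sum]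
        _ = (K₂ * δ ^ (2:ℕ)) * ((q ^ j₀ - 1) / (q - 1)) := by rw [geom_sum_eq hq1.ne' j₀]
        _ ≤ (K₂ * δ ^ (2:ℕ)) * ((4 * (δ⁻¹) ^ ((2:ℝ) - 2 * h)) / (q - 1)) := by
            apply mul_le_mul_of_nonneg_left _ (by positivity)
            rw [div_le_div_iff_of_pos_right (by linarith : (0:ℝ) < q - 1)]
            linarith [hqj₀]
        _ = (4 * K₂ * (q - 1)⁻¹) * (δ ^ (2:ℕ) * (δ⁻¹) ^ ((2:ℝ) - 2 * h)) := by ring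
        _ = (4 * K₂ * (q - 1)⁻¹) * δ ^ (2 * h) := by rw [e4]
    calc (∑ j ∈ Finset.range j₀, r ^ j * I j) + ∑' i : ℕ, r ^ (i + j₀) * I (i + j₀)
        ≤ (4 * K₂ * (q - 1)⁻¹) * δ ^ (2 * h) + (K₁ * (1 - r)⁻¹) * δ ^ (2 * h) :=
          add_le_add Hhead Htail
      _ ≤ (K₁ * (1 - r)⁻¹ + 4 * K₂ * (q - 1)⁻¹ + 1) * δ ^ (2 * h) := by nlinarith [hrp0]
end

section
/- Let (ξ_{j,k})_{(j,k)∈ℕ×ℤ} be independent standard Gaussian N(0,1) random variables. Almost surely, for every t ∈ ℝ, limsup_{j→∞} |ξ_{j,k_j(t)}| ≥ 2^{−3/2}·√π. -/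
open MeasureTheory ProbabilityTheory Filter
open scoped ENNReal NNReal

noncomputable def cc : ℝ := (2 : ℝ) ^ (-(3 : ℝ) / 2) * Real.sqrt Real.pi

lemma cc_pos : 0 < cc := by
  unfold cc
  positivity

lemma cc_eq : cc = Real.sqrt (2 * Real.pi) / 4 := by
  unfold cc
  have h2 : Real.sqrt 2 * Real.sqrt 2 = 2 := Real.mul_self_sqrt (by norm_num)
  have hs : Real.sqrt (2 * Real.pi) = Real.sqrt 2 * Real.sqrt Real.pi :=
    Real.sqrt_mul (by norm_num) _
  have hr : (2 : ℝ) ^ (-(3 : ℝ) / 2) = Real.sqrt 2 / 4 := by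
    have h32 : (2 : ℝ) ^ ((3 : ℝ) / 2) = 2 * Real.sqrt 2 := by
      rw [show (3:ℝ)/2 = 1 + 1/2 by norm_num, Real.rpow_add (by norm_num), Real.rpow_one,
        ← Real.sqrt_eq_rpow]
    rw [show -(3:ℝ)/2 = -((3:ℝ)/2) by ring, Real.rpow_neg (by norm_num), h32]
    rw [eq_div_iff (by norm_num), inv_mul_eq_div, div_eq_iff (by positivity)]
    nlinarith [Real.sqrt_nonneg 2]
  rw [hr, hs]; ring

lemma aux_floor (t : ℝ) (j d : ℕ) :
    ⌊((⌊(2:ℝ)^(j+d) * t⌋ : ℤ) : ℝ) / 2^d⌋ = ⌊(2:ℝ)^j * t⌋ := by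
  have h2 : (0:ℝ) < 2^d := by positivity
  have hle : ((⌊(2:ℝ)^j * t⌋ : ℝ)) ≤ ((⌊(2:ℝ)^(j+d) * t⌋ : ℤ) : ℝ) / 2^d := by
    rw [le_div_iff₀ h2]
    have key : (⌊(2:ℝ)^j * t⌋ * 2^d : ℤ) ≤ ⌊(2:ℝ)^(j+d) * t⌋ := by
      apply Int.le_floor.mpr
      push_cast
      have h1 : ((⌊(2:ℝ)^j * t⌋ : ℝ)) ≤ 2^j * t := Int.floor_le _
      rw [pow_add]; nlinarith
    exact_mod_cast key
  have hlt : ((⌊(2:ℝ)^(j+d) * t⌋ : ℤ) : ℝ) / 2^d < ⌊(2:ℝ)^j * t⌋ + 1 := by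
    rw [div_lt_iff₀ h2]
    have h1 : ((⌊(2:ℝ)^(j+d) * t⌋ : ℤ) : ℝ) ≤ 2^(j+d) * t := Int.floor_le _
    have h3 : (2:ℝ)^j * t < ⌊(2:ℝ)^j * t⌋ + 1 := Int.lt_floor_add_one _
    rw [pow_add] at h1 ⊢
    nlinarith
  rw [Int.floor_eq_iff]
  constructor
  · exact_mod_cast hle
  · exact_mod_cast hlt

lemma gauss_pdf_eq (x : ℝ) :
    gaussianPDFReal 0 1 x = (Real.sqrt (2 * Real.pi))⁻¹ * Real.exp (-x^2 / 2) := by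
  simp [gaussianPDFReal]


lemma gauss_int_lt : ∫ x in Set.Ioo (-cc) cc, gaussianPDFReal 0 1 x < 1/2 := by
  set M : ℝ := (Real.sqrt (2 * Real.pi))⁻¹ with hM
  have hMpos : 0 < M := by
    rw [hM]; positivity
  set M' : ℝ := M * Real.exp (-cc^2 / 8) with hM'
  have hInt : ∀ a b : ℝ, IntervalIntegrable (gaussianPDFReal 0 1) volume a b :=
    fun a b => (integrable_gaussianPDFReal 0 1).intervalIntegrable
  have hc := cc_pos
  have h0 : ∫ x in Set.Ioo (-cc) cc, gaussianPDFReal 0 1 x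
      = ∫ x in (-cc)..cc, gaussianPDFReal 0 1 x := by
    rw [intervalIntegral.integral_of_le (by linarith), ← integral_Ioc_eq_integral_Ioo]
  have hsplit : ∫ x in (-cc)..cc, gaussianPDFReal 0 1 x
      = (∫ x in (-cc)..(-(cc/2)), gaussianPDFReal 0 1 x)
      + (∫ x in (-(cc/2))..(cc/2), gaussianPDFReal 0 1 x)
      + (∫ x in (cc/2)..cc, gaussianPDFReal 0 1 x) := by
    rw [intervalIntegral.integral_add_adjacent_intervals (hInt _ _) (hInt _ _),
      intervalIntegral.integral_add_adjacent_intervals (hInt _ _) (hInt _ _)]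
  have hside : ∀ x : ℝ, cc/2 ≤ |x| → gaussianPDFReal 0 1 x ≤ M' := by
    intro x hx
    rw [gauss_pdf_eq, hM']
    apply mul_le_mul_of_nonneg_left _ (le_of_lt hMpos)
    apply Real.exp_le_exp.mpr
    have : (cc/2)^2 ≤ x^2 := by
      have := sq_abs x
      nlinarith [abs_nonneg x]
    nlinarith
  have hb1 : (∫ x in (-cc)..(-(cc/2)), gaussianPDFReal 0 1 x) ≤ (cc/2) * M' := by
    have := intervalIntegral.integral_mono_on (by linarith : -cc ≤ -(cc/2)) (hInt _ _)
      (intervalIntegrable_const) (fun x hx => hside x (by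
        rcases hx with ⟨h1, h2⟩
        rw [abs_of_nonpos (by linarith)]; linarith))
    simpa using this.trans_eq (by rw [intervalIntegral.integral_const]; ring_nf)
  have hb3 : (∫ x in (cc/2)..cc, gaussianPDFReal 0 1 x) ≤ (cc/2) * M' := by
    have := intervalIntegral.integral_mono_on (by linarith : cc/2 ≤ cc) (hInt _ _)
      (intervalIntegrable_const) (fun x hx => hside x (by
        rcases hx with ⟨h1, h2⟩
        rw [abs_of_nonneg (by linarith)]; linarith))
    simpa using this.trans_eq (by rw [intervalIntegral.integral_const]; ring_nf)
  have hb2 : (∫ x in (-(cc/2))..(cc/2), gaussianPDFReal 0 1 x) ≤ cc * M := by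
    have := intervalIntegral.integral_mono_on (by linarith : -(cc/2) ≤ cc/2) (hInt _ _)
      (intervalIntegrable_const (c := M)) (fun x hx => by
        rw [gauss_pdf_eq, ← hM]
        nth_rewrite 2 [show M = M * 1 by ring]
        apply mul_le_mul_of_nonneg_left _ (le_of_lt hMpos)
        rw [show (1:ℝ) = Real.exp 0 by simp]
        apply Real.exp_le_exp.mpr
        nlinarith [sq_nonneg x])
    simpa using this.trans_eq (by rw [intervalIntegral.integral_const, smul_eq_mul]; ring)
  have hccM : cc * M = 1/4 := by
    rw [cc_eq, hM]
    have : Real.sqrt (2 * Real.pi) ≠ 0 := by positivity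
    field_simp
  have hexp : Real.exp (-cc^2/8) < 1 :=
    Real.exp_lt_one_iff.mpr (by nlinarith [cc_pos])
  have hexppos : 0 < Real.exp (-cc^2/8) := Real.exp_pos _
  have hM'eq : cc * M' = (cc * M) * Real.exp (-cc^2/8) := by rw [hM']; ring
  rw [h0, hsplit]
  nlinarith [hb1, hb2, hb3]


theorem stmt_10 {Ω : Type*} [MeasurableSpace Ω] (P : Measure Ω) [IsProbabilityMeasure P]
    (ξ : ℕ × ℤ → Ω → ℝ)
    (hmeas : ∀ p, Measurable (ξ p))
    (hindep : iIndepFun ξ P)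
    (hgauss : ∀ p, Measure.map (ξ p) P = gaussianReal 0 1) :
    ∀ᵐ ω ∂P, ∀ t : ℝ,
      ENNReal.ofReal ((2 : ℝ) ^ (-(3 : ℝ) / 2) * Real.sqrt Real.pi) ≤
        Filter.limsup (fun j : ℕ => ENNReal.ofReal |ξ (j, ⌊(2 : ℝ) ^ j * t⌋) ω|) Filter.atTop := by
  classical
  set A : Set ℝ := Set.Ioo (-cc) cc with hAdef
  have hA : MeasurableSet A := measurableSet_Ioo
  set q0 : ℝ := ∫ x in Set.Ioo (-cc) cc, gaussianPDFReal 0 1 x with hq0def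
  have hq0nonneg : 0 ≤ q0 :=
    setIntegral_nonneg measurableSet_Ioo (fun x _ => gaussianPDFReal_nonneg 0 1 x)
  have hq0lt : q0 < 1/2 := gauss_int_lt
  set q : ℝ≥0∞ := ENNReal.ofReal q0 with hqdef
  have hqne : q ≠ ⊤ := ENNReal.ofReal_ne_top
  have hpre : ∀ p, P (ξ p ⁻¹' A) = q := by
    intro p
    rw [← Measure.map_apply (hmeas p) hA, hgauss p,
      gaussianReal_apply_eq_integral 0 one_ne_zero]
  -- the bad events
  set E : ℕ → ℤ → ℕ → Set Ω := fun J k n =>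
    ⋃ m ∈ Finset.Ico ((2:ℤ)^n * k) ((2:ℤ)^n * (k+1)),
      ⋂ i ∈ Finset.range (n+1), ξ (J+i, ⌊((m:ℤ):ℝ)/2^(n-i)⌋) ⁻¹' A with hEdef
  have hInter : ∀ (J n : ℕ) (g : ℕ → ℤ),
      P (⋂ i ∈ Finset.range (n+1), ξ (J+i, g i) ⁻¹' A) = q^(n+1) := by
    intro J n g
    set F : ℕ → ℕ × ℤ := fun i => (J+i, g i) with hFdef
    have hFinj : Function.Injective F := by
      intro i j h
      have := congrArg Prod.fst h
      simpa [hFdef] using this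
    have hset : (⋂ i ∈ Finset.range (n+1), ξ (F i) ⁻¹' A)
        = ⋂ p ∈ (Finset.range (n+1)).image F, ξ p ⁻¹' A := by
      ext ω
      simp only [Set.mem_iInter, Finset.mem_image]
      constructor
      · rintro h p ⟨i, hi, rfl⟩
        exact h i hi
      · intro h i hi
        exact h (F i) ⟨i, hi, rfl⟩
    rw [hset,
      hindep.measure_inter_preimage_eq_mul ((Finset.range (n+1)).image F)
        (sets := fun _ => A) (fun p _ => hA)]
    rw [Finset.prod_congr rfl (fun p _ => hpre p), Finset.prod_const,
      Finset.card_image_of_injective _ hFinj, Finset.card_range]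
  have hEbound : ∀ (J : ℕ) (k : ℤ) (n : ℕ), P (E J k n) ≤ q * (2*q)^n := by
    intro J k n
    have h1 : P (E J k n) ≤ ∑ m ∈ Finset.Ico ((2:ℤ)^n * k) ((2:ℤ)^n * (k+1)),
        P (⋂ i ∈ Finset.range (n+1), ξ (J+i, ⌊((m:ℤ):ℝ)/2^(n-i)⌋) ⁻¹' A) :=
      measure_biUnion_finset_le _ _
    have h2 : ∀ m : ℤ, P (⋂ i ∈ Finset.range (n+1), ξ (J+i, ⌊((m:ℤ):ℝ)/2^(n-i)⌋) ⁻¹' A)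
        = q^(n+1) := fun m => hInter J n _
    calc P (E J k n) ≤ _ := h1
      _ = (Finset.Ico ((2:ℤ)^n * k) ((2:ℤ)^n * (k+1))).card • q^(n+1) := by
          rw [Finset.sum_congr rfl (fun m _ => h2 m), Finset.sum_const]
      _ = (2^n : ℕ) • q^(n+1) := by
          rw [Int.card_Ico]
          congr 1
          rw [show (2:ℤ)^n * (k+1) - 2^n * k = ((2^n : ℕ) : ℤ) by push_cast; ring,
            Int.toNat_natCast]
      _ = q * (2*q)^n := by
          rw [nsmul_eq_mul]
          push_cast
          ring
  have h2q : 2*q < 1 := by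
    rw [hqdef, show (2:ℝ≥0∞) = ENNReal.ofReal 2 by simp,
      ← ENNReal.ofReal_mul (by norm_num)]
    exact ENNReal.ofReal_lt_one.mpr (by linarith)
  have hzero : ∀ (J : ℕ) (k : ℤ), P (⋂ n, E J k n) = 0 := by
    intro J k
    have htend : Tendsto (fun n : ℕ => q * (2*q)^n) atTop (nhds 0) := by
      have := ENNReal.Tendsto.const_mul
        (ENNReal.tendsto_pow_atTop_nhds_zero_of_lt_one h2q) (Or.inr hqne)
      simpa using this
    have hle : ∀ n, P (⋂ n, E J k n) ≤ q * (2*q)^n := fun n =>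
      (measure_mono (Set.iInter_subset _ n)).trans (hEbound J k n)
    exact le_zero_iff.mp
      (le_of_tendsto_of_tendsto' tendsto_const_nhds htend hle)
  have hBad : P (⋃ J : ℕ, ⋃ k : ℤ, ⋂ n, E J k n) = 0 :=
    measure_iUnion_null fun J => measure_iUnion_null fun k => hzero J k
  have hae : ∀ᵐ ω ∂P, ω ∉ ⋃ J : ℕ, ⋃ k : ℤ, ⋂ n, E J k n := by
    rw [ae_iff]
    simp only [not_not, Set.setOf_mem_eq]
    exact hBad
  filter_upwards [hae] with ω hω t
  by_contra hcon
  rw [not_le] at hcon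
  have hcon' : Filter.limsup (fun j : ℕ => ENNReal.ofReal |ξ (j, ⌊(2 : ℝ) ^ j * t⌋) ω|)
      Filter.atTop < ENNReal.ofReal cc := hcon
  have hev := Filter.eventually_lt_of_limsup_lt hcon'
  rw [eventually_atTop] at hev
  obtain ⟨J, hJ⟩ := hev
  simp only [Set.mem_iUnion, Set.mem_iInter, not_exists, not_forall] at hω
  obtain ⟨n, hn⟩ := hω J ⌊(2:ℝ)^J * t⌋
  apply hn
  set k : ℤ := ⌊(2:ℝ)^J * t⌋ with hkdef
  set m : ℤ := ⌊(2:ℝ)^(J+n) * t⌋ with hmdef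
  have habs : ∀ j : ℕ, J ≤ j → |ξ (j, ⌊(2 : ℝ) ^ j * t⌋) ω| < cc := by
    intro j hj
    exact (ENNReal.ofReal_lt_ofReal_iff cc_pos).mp (hJ j hj)
  have hmem : m ∈ Finset.Ico ((2:ℤ)^n * k) ((2:ℤ)^n * (k+1)) := by
    rw [Finset.mem_Ico]
    have hp : (0:ℝ) < 2^n := by positivity
    constructor
    · apply Int.le_floor.mpr
      push_cast
      have h1 : ((k:ℝ)) ≤ 2^J * t := Int.floor_le _
      rw [pow_add]
      nlinarith
    · apply Int.floor_lt.mpr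
      push_cast
      have h1 : (2:ℝ)^J * t < (k:ℝ) + 1 := Int.lt_floor_add_one _
      rw [pow_add]
      nlinarith
  refine Set.mem_iUnion₂.mpr ⟨m, hmem, Set.mem_iInter₂.mpr fun i hi => ?_⟩
  rw [Finset.mem_range, Nat.lt_succ_iff] at hi
  have hidx : ⌊((m:ℤ):ℝ)/2^(n-i)⌋ = ⌊(2:ℝ)^(J+i) * t⌋ := by
    rw [hmdef, show J + n = (J+i) + (n-i) by omega]
    exact aux_floor t (J+i) (n-i)
  rw [Set.mem_preimage, hidx, hAdef]
  rw [Set.mem_Ioo, ← abs_lt]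
  exact habs (J+i) (by omega)
end

section
/- Let (ξ_{j,k})_{(j,k)∈ℕ×ℤ} be independent standard Gaussian N(0,1) random variables. Almost surely, for every nonempty open interval I of ℝ there exists t ∈ I such that limsup_{j→∞} |ξ_{j,k_j(t)}| / √j > 0. -/
open MeasureTheory ProbabilityTheory Filter
open scoped NNReal ENNReal

namespace Stmt12


def sN (n : ℕ) : ℕ := 4 ^ (n + 2)
def JN (n : ℕ) : ℕ := sN n ^ 2

lemma sN_ge (n : ℕ) : 16 ≤ sN n := by
  have : 4 ^ 2 ≤ 4 ^ (n + 2) := Nat.pow_le_pow_right (by norm_num) (by omega)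
  simpa [sN] using this

lemma JN_eq (n : ℕ) : JN n = 16 ^ (n + 2) := by
  rw [JN, sN, ← pow_mul]
  rw [show (n+2)*2 = 2*(n+2) by ring, pow_mul]
  norm_num

lemma JN_succ (n : ℕ) : JN (n + 1) = JN n + 15 * JN n := by
  rw [JN_eq, JN_eq, pow_succ]
  ring

lemma JN_pos (n : ℕ) : 0 < JN n := by
  rw [JN_eq]; positivity

lemma JN_ge_256 (n : ℕ) : 256 ≤ JN n := by
  rw [JN_eq]
  calc (256 : ℕ) = 16 ^ 2 := by norm_num
  _ ≤ 16 ^ (n + 2) := Nat.pow_le_pow_right (by norm_num) (by omega)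

lemma JN_ge (n : ℕ) : n + 1 ≤ JN n := by
  rw [JN_eq]
  calc n + 1 ≤ 2 ^ (n + 2) := by
        have := Nat.lt_two_pow_self (n := n)
        have : 2 ^ n ≤ 2 ^ (n + 2) := Nat.pow_le_pow_right (by norm_num) (by omega)
        omega
  _ ≤ 16 ^ (n + 2) := Nat.pow_le_pow_left (by norm_num) _

lemma JN_strictMono : StrictMono JN := by
  apply strictMono_nat_of_lt_succ
  intro n
  have h := JN_succ n
  have := JN_pos n
  omega

lemma sqrt_JN (n : ℕ) : Real.sqrt (JN n) = sN n := by
  rw [JN]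
  push_cast
  exact Real.sqrt_sq (by positivity)

noncomputable def parents (n : ℕ) : Finset ℤ := Finset.Icc (-(n * 2 ^ JN n : ℤ)) (n * 2 ^ JN n)

noncomputable def childs (n : ℕ) (k : ℤ) : Finset ℤ :=
  Finset.Ico ((2:ℤ) ^ (15 * JN n) * k) ((2:ℤ) ^ (15 * JN n) * k + (2 ^ (15 * JN n) - 1))

lemma card_childs (n : ℕ) (k : ℤ) : (childs n k).card = 2 ^ (15 * JN n) - 1 := by
  rw [childs, Int.card_Ico]
  have h : (1:ℤ) ≤ 2 ^ (15 * JN n) := one_le_pow₀ (by norm_num)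
  have : ((2:ℤ) ^ (15 * JN n) * k + (2 ^ (15 * JN n) - 1)) - 2 ^ (15 * JN n) * k
      = (2:ℤ) ^ (15 * JN n) - 1 := by ring
  rw [this]
  have h2 : (1:ℕ) ≤ 2 ^ (15 * JN n) := Nat.one_le_two_pow
  have : ((2:ℤ) ^ (15 * JN n) - 1) = ((2 ^ (15 * JN n) - 1 : ℕ) : ℤ) := by
    push_cast [h2]
    ring
  rw [this, Int.toNat_natCast]

lemma card_parents (n : ℕ) : (parents n).card = 2 * (n * 2 ^ JN n) + 1 := by
  rw [parents, Int.card_Icc]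
  have h : (0:ℤ) ≤ n * 2 ^ JN n := by positivity
  have : (n * 2 ^ JN n : ℤ) + 1 - (-(n * 2 ^ JN n)) = 2 * (n * 2 ^ JN n) + 1 := by ring
  rw [this]
  have : ((2:ℤ) * (n * 2 ^ JN n) + 1) = ((2 * (n * 2 ^ JN n) + 1 : ℕ) : ℤ) := by push_cast; ring
  rw [this, Int.toNat_natCast]

lemma childs_subset_parents {n : ℕ} {k k' : ℤ} (hk : k ∈ parents n) (hk' : k' ∈ childs n k) :
    k' ∈ parents (n + 1) := by
  rw [parents, Finset.mem_Icc] at hk ⊢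
  rw [childs, Finset.mem_Ico] at hk'
  have hD : (1:ℤ) ≤ 2 ^ (15 * JN n) := one_le_pow₀ (by norm_num)
  have hpow : ((2:ℤ) ^ JN (n+1)) = 2 ^ (15 * JN n) * 2 ^ JN n := by
    rw [← pow_add, JN_succ]; ring_nf
  have h2 : (0:ℤ) < 2 ^ JN n := by positivity
  constructor
  · have : -(↑n * 2 ^ JN n) ≤ k := hk.1
    have h1 : (2:ℤ) ^ (15 * JN n) * (-(↑n * 2 ^ JN n)) ≤ 2 ^ (15 * JN n) * k :=
      mul_le_mul_of_nonneg_left this (by positivity)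
    push_cast
    rw [hpow]
    nlinarith [hk'.1]
  · have h1 : k' ≤ 2 ^ (15 * JN n) * k + (2 ^ (15 * JN n) - 1) - 1 := by omega
    have h3 : k ≤ ↑n * 2 ^ JN n := hk.2
    push_cast
    rw [hpow]
    nlinarith


lemma JN_sq (n : ℕ) : ((JN n : ℕ) : ℝ) = ((sN n : ℕ) : ℝ) ^ 2 := by
  rw [JN]; push_cast; ring



lemma sqrt_two_pi_le : Real.sqrt (2 * Real.pi) ≤ Real.exp 1 := by
  have h1 : Real.sqrt (2 * Real.pi) ≤ 2.52 := by
    rw [show (2.52:ℝ) = Real.sqrt (2.52 ^ 2) from (Real.sqrt_sq (by norm_num)).symm]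
    apply Real.sqrt_le_sqrt
    nlinarith [Real.pi_lt_d2]
  have h2 : (2.52:ℝ) ≤ Real.exp 1 := by
    have := Real.exp_one_gt_d9
    linarith
  linarith

lemma gauss_pdf_lb {r x : ℝ} (hr : 0 ≤ r) (hx : x ∈ Set.Icc r (r + 1)) :
    Real.exp (-(r + 1) ^ 2 / 2 - 1) ≤ gaussianPDFReal 0 1 x := by
  rw [gaussianPDFReal]
  have hx1 := hx.1
  have hx2 := hx.2
  have hxsq : x ^ 2 ≤ (r + 1) ^ 2 := by nlinarith
  have hexp : Real.exp (-(r + 1) ^ 2 / 2) ≤ Real.exp (-(x - 0) ^ 2 / (2 * (1:ℝ≥0))) := by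
    apply Real.exp_le_exp.2
    push_cast
    nlinarith
  have hc : Real.exp (-1 : ℝ) ≤ (Real.sqrt (2 * Real.pi * (1:ℝ≥0)))⁻¹ := by
    push_cast
    rw [mul_one]
    rw [Real.exp_neg]
    apply inv_anti₀
    · positivity
    · exact sqrt_two_pi_le
  calc Real.exp (-(r + 1) ^ 2 / 2 - 1)
      = Real.exp (-1:ℝ) * Real.exp (-(r + 1) ^ 2 / 2) := by
        rw [← Real.exp_add]; ring_nf
    _ ≤ (Real.sqrt (2 * Real.pi * (1:ℝ≥0)))⁻¹ * Real.exp (-(x - 0) ^ 2 / (2 * (1:ℝ≥0))) := by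
        apply mul_le_mul hc hexp (by positivity) (by positivity)

lemma gauss_tail {r : ℝ} (hr : 0 ≤ r) :
    ENNReal.ofReal (Real.exp (-(r + 1) ^ 2 / 2 - 1)) ≤ gaussianReal 0 1 (Set.Ici r) := by
  rw [gaussianReal_apply 0 one_ne_zero]
  have hsub : Set.Icc r (r + 1) ⊆ Set.Ici r := fun x hx => hx.1
  calc ENNReal.ofReal (Real.exp (-(r + 1) ^ 2 / 2 - 1))
      = ENNReal.ofReal (Real.exp (-(r + 1) ^ 2 / 2 - 1)) * volume (Set.Icc r (r + 1)) := by
        rw [Real.volume_Icc]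
        norm_num
    _ = ∫⁻ _ in Set.Icc r (r + 1), ENNReal.ofReal (Real.exp (-(r + 1) ^ 2 / 2 - 1)) := by
        rw [setLIntegral_const]
    _ ≤ ∫⁻ x in Set.Icc r (r + 1), gaussianPDF 0 1 x := by
        apply setLIntegral_mono (measurable_gaussianPDF 0 1)
        intro x hx
        exact ENNReal.ofReal_le_ofReal (gauss_pdf_lb hr hx)
    _ ≤ ∫⁻ x in Set.Ici r, gaussianPDF 0 1 x := lintegral_mono_set hsub


lemma sN_succ' (n : ℕ) : sN (n + 1) = 4 * sN n := by
  rw [sN, sN, pow_succ]; ring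

lemma exp_twothirds_le : Real.exp (2/3 : ℝ) ≤ 2 := by
  have h3 : Real.exp (2/3 : ℝ) ^ 3 = Real.exp 2 := by
    rw [← Real.exp_nat_mul]
    norm_num
  have he2 : Real.exp 2 < 8 := by
    have h := Real.exp_one_lt_d9
    have : Real.exp 2 = Real.exp 1 * Real.exp 1 := by
      rw [← Real.exp_add]; norm_num
    nlinarith [Real.exp_pos 1]
  by_contra hc
  push_neg at hc
  have : (8:ℝ) < Real.exp (2/3:ℝ) ^ 3 := by
    have h0 : (0:ℝ) < Real.exp (2/3:ℝ) := Real.exp_pos _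
    nlinarith [mul_pos h0 h0]
  rw [h3] at this
  linarith

lemma two_pow_le_exp (m : ℕ) : ((2:ℝ) ^ m) ≤ Real.exp m := by
  calc ((2:ℝ) ^ m) ≤ (Real.exp 1) ^ m := by
        apply pow_le_pow_left₀ (by norm_num)
        nlinarith [Real.exp_one_gt_d9]
    _ = Real.exp m := by rw [← Real.exp_nat_mul]; ring_nf

lemma exp_le_two_pow (m : ℕ) : Real.exp ((2/3 : ℝ) * m) ≤ (2:ℝ) ^ m := by
  calc Real.exp ((2/3 : ℝ) * m) = (Real.exp (2/3:ℝ)) ^ m := by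
        rw [← Real.exp_nat_mul]; ring_nf
    _ ≤ (2:ℝ) ^ m := pow_le_pow_left₀ (Real.exp_nonneg _) exp_twothirds_le m

lemma term_bound (n : ℕ) :
    ((2 * (n * 2 ^ JN n) + 1 : ℕ) : ℝ) *
      Real.exp (-(((2 ^ (15 * JN n) - 1 : ℕ) : ℝ) *
        Real.exp (-(Real.sqrt ((JN (n+1) : ℕ) : ℝ) + 1) ^ 2 / 2 - 1))) ≤ (1/2) ^ n := by
  set s : ℝ := (sN n : ℝ) with hsdef
  have hs : (16:ℝ) ≤ s := by rw [hsdef]; exact_mod_cast sN_ge n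
  set j : ℝ := (JN n : ℝ) with hjdef
  have hj : j = s ^ 2 := JN_sq n
  have hj256 : (256:ℝ) ≤ j := by rw [hjdef]; exact_mod_cast JN_ge_256 n
  have hjn : (n:ℝ) + 1 ≤ j := by rw [hjdef]; exact_mod_cast JN_ge n
  have hsqrt : Real.sqrt ((JN (n+1) : ℕ) : ℝ) = 4 * s := by
    rw [sqrt_JN (n+1), sN_succ']; push_cast; ring
  rw [hsqrt]
  set e : ℝ := Real.exp (-(4 * s + 1) ^ 2 / 2 - 1) with hedef
  -- lower bound on M
  have hMnat : 2 ^ (15 * JN n - 1) ≤ 2 ^ (15 * JN n) - 1 := by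
    have h1 : 1 ≤ 15 * JN n := by have := JN_ge_256 n; omega
    have h2 : 2 ^ (15 * JN n) = 2 * 2 ^ (15 * JN n - 1) := by
      rw [← pow_succ']
      congr 1
      omega
    have h3 : 1 ≤ 2 ^ (15 * JN n - 1) := Nat.one_le_two_pow
    omega
  have hM : Real.exp (10 * j - 2/3) ≤ ((2 ^ (15 * JN n) - 1 : ℕ) : ℝ) := by
    have h1 : ((2 ^ (15 * JN n - 1) : ℕ) : ℝ) ≤ ((2 ^ (15 * JN n) - 1 : ℕ) : ℝ) := by
      exact_mod_cast hMnat
    have h2 : Real.exp ((2/3 : ℝ) * (15 * JN n - 1 : ℕ)) ≤ ((2:ℝ) ^ (15 * JN n - 1)) :=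
      exp_le_two_pow _
    have h4 : ((15 * JN n - 1 : ℕ) : ℝ) = 15 * j - 1 := by
      have h1' : 1 ≤ 15 * JN n := by have := JN_ge_256 n; omega
      push_cast [h1']
      ring
    have h5 : (2/3 : ℝ) * (15 * j - 1) = 10 * j - 2/3 := by ring
    rw [h4, h5] at h2
    calc Real.exp (10 * j - 2/3) ≤ ((2:ℝ) ^ (15 * JN n - 1)) := h2
      _ = ((2 ^ (15 * JN n - 1) : ℕ) : ℝ) := by push_cast; ring
      _ ≤ _ := h1
  -- lower bound on M * e
  have hMe : Real.exp j ≤ ((2 ^ (15 * JN n) - 1 : ℕ) : ℝ) * e := by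
    have h1 : Real.exp (10 * j - 2/3) * e ≤ ((2 ^ (15 * JN n) - 1 : ℕ) : ℝ) * e :=
      mul_le_mul_of_nonneg_right hM (Real.exp_nonneg _)
    have h2 : Real.exp (10 * j - 2/3) * e = Real.exp (10 * j - 2/3 + (-(4 * s + 1) ^ 2 / 2 - 1)) := by
      rw [hedef, ← Real.exp_add]
    have h3 : j ≤ 10 * j - 2/3 + (-(4 * s + 1) ^ 2 / 2 - 1) := by nlinarith
    calc Real.exp j ≤ Real.exp (10 * j - 2/3 + (-(4 * s + 1) ^ 2 / 2 - 1)) := Real.exp_le_exp.2 h3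
      _ = Real.exp (10 * j - 2/3) * e := h2.symm
      _ ≤ _ := h1
  -- upper bound on card * 2^n
  have hcard : ((2 * (n * 2 ^ JN n) + 1 : ℕ) : ℝ) * 2 ^ n ≤ Real.exp (j + 2 * n + 1) := by
    have h1 : (2 * (n * 2 ^ JN n) + 1 : ℕ) * 2 ^ n ≤ 2 ^ (JN n + 2 * n + 1) := by
      have h2 : 2 * n + 1 ≤ 2 ^ (n + 1) := by
        have := Nat.lt_two_pow_self (n := n)
        calc 2 * n + 1 ≤ 2 * 2 ^ n - 1 := by omega
          _ ≤ 2 ^ (n + 1) := by rw [pow_succ]; omega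
      calc (2 * (n * 2 ^ JN n) + 1) * 2 ^ n ≤ ((2 * n + 1) * 2 ^ JN n) * 2 ^ n := by
            have : 2 * (n * 2 ^ JN n) + 1 ≤ (2 * n + 1) * 2 ^ JN n := by
              have := Nat.one_le_two_pow (n := JN n)
              nlinarith
            exact Nat.mul_le_mul_right _ this
        _ ≤ (2 ^ (n + 1) * 2 ^ JN n) * 2 ^ n := by
            apply Nat.mul_le_mul_right
            exact Nat.mul_le_mul_right _ h2
        _ = 2 ^ (JN n + 2 * n + 1) := by rw [← pow_add, ← pow_add]; ring_nf
    calc ((2 * (n * 2 ^ JN n) + 1 : ℕ) : ℝ) * 2 ^ n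
        = (((2 * (n * 2 ^ JN n) + 1) * 2 ^ n : ℕ) : ℝ) := by push_cast; ring
      _ ≤ ((2 ^ (JN n + 2 * n + 1) : ℕ) : ℝ) := by exact_mod_cast h1
      _ = (2:ℝ) ^ (JN n + 2 * n + 1) := by push_cast; ring
      _ ≤ Real.exp ((JN n + 2 * n + 1 : ℕ)) := two_pow_le_exp _
      _ = Real.exp (j + 2 * n + 1) := by rw [hjdef]; push_cast; ring_nf
  -- exp j ≥ j + 2n + 1
  have hexpj : j + 2 * n + 1 ≤ Real.exp j := by
    have h1 : Real.exp j = Real.exp (j/2) ^ 2 := by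
      rw [← Real.exp_nat_mul]
      congr 1
      push_cast
      ring
    have h2 : 1 + j/2 ≤ Real.exp (j/2) := by
      have := Real.add_one_le_exp (j/2); linarith
    have h3 : (1 + j/2) ^ 2 ≤ Real.exp (j/2) ^ 2 := by
      apply pow_le_pow_left₀ (by linarith) h2
    have h4 : (n:ℝ) ≤ j := by linarith
    nlinarith
  -- key inequality
  have hkey : ((2 * (n * 2 ^ JN n) + 1 : ℕ) : ℝ) * 2 ^ n
      ≤ Real.exp (((2 ^ (15 * JN n) - 1 : ℕ) : ℝ) * e) := by
    calc ((2 * (n * 2 ^ JN n) + 1 : ℕ) : ℝ) * 2 ^ n ≤ Real.exp (j + 2 * n + 1) := hcard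
      _ ≤ Real.exp (Real.exp j) := Real.exp_le_exp.2 hexpj
      _ ≤ Real.exp (((2 ^ (15 * JN n) - 1 : ℕ) : ℝ) * e) := Real.exp_le_exp.2 hMe
  -- conclude
  set c : ℝ := ((2 * (n * 2 ^ JN n) + 1 : ℕ) : ℝ) with hcdef
  set E : ℝ := ((2 ^ (15 * JN n) - 1 : ℕ) : ℝ) * e with hEdef
  have h2n : (0:ℝ) < 2 ^ n := by positivity
  have hfin : c * Real.exp (-E) * 2 ^ n ≤ 1 := by
    rw [Real.exp_neg]
    calc c * (Real.exp E)⁻¹ * 2 ^ n = (c * 2 ^ n) * (Real.exp E)⁻¹ := by ring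
      _ ≤ Real.exp E * (Real.exp E)⁻¹ :=
          mul_le_mul_of_nonneg_right hkey (by positivity)
      _ = 1 := mul_inv_cancel₀ (Real.exp_ne_zero _)
  have : c * Real.exp (-E) ≤ 1 / 2 ^ n := by
    rw [le_div_iff₀ h2n]
    exact hfin
  calc c * Real.exp (-E) ≤ 1 / 2 ^ n := this
    _ = (1/2:ℝ) ^ n := by rw [one_div_pow]

lemma det (g : ℕ × ℤ → ℝ) (N : ℕ)
    (hB : ∀ n, N ≤ n → ∀ k ∈ parents n, ∃ k' ∈ childs n k,
      Real.sqrt ((JN (n+1) : ℕ) : ℝ) ≤ g (JN (n+1), k'))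
    (a b : ℝ) (hab : a < b) :
    ∃ t ∈ Set.Ioo a b, 0 < Filter.limsup (fun j : ℕ =>
      ENNReal.ofReal (|g (j, ⌊(2:ℝ) ^ j * t⌋)| / Real.sqrt (j:ℝ))) Filter.atTop := by
  choose ch hch1 hch2 using hB
  -- choose n₀
  obtain ⟨n₁, hn₁⟩ := exists_nat_gt (max (|a| + 2) (2 / (b - a)))
  set n₀ : ℕ := max n₁ N with hn₀def
  have hN : N ≤ n₀ := le_max_right _ _
  have hn₀R : max (|a| + 2) (2 / (b - a)) < (n₀ : ℝ) := by
    refine lt_of_lt_of_le hn₁ ?_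
    exact_mod_cast Nat.le_max_left n₁ N
  have ha2 : |a| + 2 < (n₀ : ℝ) := lt_of_le_of_lt (le_max_left _ _) hn₀R
  have hba : 2 / (b - a) < (n₀ : ℝ) := lt_of_le_of_lt (le_max_right _ _) hn₀R
  have hpos : ∀ m : ℕ, (0:ℝ) < 2 ^ m := fun m => by positivity
  have hn₀pow : (n₀ : ℝ) ≤ 2 ^ JN n₀ := by
    have h1 : n₀ ≤ JN n₀ := le_trans (Nat.le_succ n₀) (JN_ge n₀)
    have h2 : JN n₀ < 2 ^ JN n₀ := Nat.lt_two_pow_self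
    have : n₀ ≤ 2 ^ JN n₀ := by omega
    exact_mod_cast this
  set J₀ : ℕ := JN n₀ with hJ₀def
  -- choose k₀
  set k₀ : ℤ := ⌊(2:ℝ) ^ J₀ * a⌋ + 1 with hk₀def
  have hfl := Int.floor_le ((2:ℝ) ^ J₀ * a)
  have hfl2 := Int.lt_floor_add_one ((2:ℝ) ^ J₀ * a)
  have hk₀a : (2:ℝ) ^ J₀ * a < (k₀ : ℝ) := by rw [hk₀def]; push_cast; linarith
  have hbapos : (0:ℝ) < b - a := by linarith
  have hgap : 2 / (b - a) < 2 ^ J₀ := lt_of_lt_of_le hba hn₀pow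
  have hgap2 : (2:ℝ) < (b - a) * 2 ^ J₀ := by
    rw [div_lt_iff₀ hbapos] at hgap
    linarith
  have hk₀b : ((k₀ : ℝ) + 1) ≤ (2:ℝ) ^ J₀ * b := by
    rw [hk₀def]
    push_cast
    nlinarith
  have hk₀p : k₀ ∈ parents n₀ := by
    rw [parents, Finset.mem_Icc]
    have habs1 : -|a| ≤ a := neg_abs_le a
    have habs2 : a ≤ |a| := le_abs_self a
    constructor
    · have : -((n₀:ℝ) * 2 ^ J₀) ≤ (k₀ : ℝ) := by
        have h1 : -((n₀:ℝ) * 2 ^ J₀) ≤ (2:ℝ) ^ J₀ * a := by nlinarith [hpos J₀]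
        linarith
      exact_mod_cast this
    · have : (k₀ : ℝ) ≤ (n₀:ℝ) * 2 ^ J₀ := by
        have h1 : (k₀ : ℝ) ≤ (2:ℝ) ^ J₀ * a + 2 := by rw [hk₀def]; push_cast; linarith
        nlinarith [hpos J₀]
      exact_mod_cast this
  -- the recursive sequence
  let K : ∀ i : ℕ, {k : ℤ // k ∈ parents (n₀ + i)} :=
    fun i => Nat.rec (motive := fun i => {k : ℤ // k ∈ parents (n₀ + i)})
      ⟨k₀, hk₀p⟩
      (fun i p => ⟨ch (n₀ + i) (hN.trans (Nat.le_add_right n₀ i)) p.1 p.2,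
        childs_subset_parents p.2 (hch1 _ _ _ _)⟩) i
  have hK1 : ∀ i, ((K (i+1)).1) ∈ childs (n₀ + i) ((K i).1) := fun i => hch1 _ _ _ _
  have hK2 : ∀ i, Real.sqrt ((JN (n₀ + i + 1) : ℕ) : ℝ) ≤ g (JN (n₀ + i + 1), (K (i+1)).1) :=
    fun i => hch2 _ _ _ _
  -- endpoints
  set l : ℕ → ℝ := fun i => ((K i).1 : ℝ) / 2 ^ JN (n₀ + i) with hldef
  set R : ℕ → ℝ := fun i => (((K i).1 : ℝ) + 1) / 2 ^ JN (n₀ + i) with hRdef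
  have hpow_succ : ∀ m : ℕ, (2:ℝ) ^ JN (m + 1) = 2 ^ (15 * JN m) * 2 ^ JN m := by
    intro m
    rw [JN_succ, pow_add]
    ring
  have hIco : ∀ i, (2:ℤ) ^ (15 * JN (n₀ + i)) * (K i).1 ≤ (K (i+1)).1 ∧
      ((K (i+1)).1 : ℤ) < 2 ^ (15 * JN (n₀ + i)) * (K i).1 + (2 ^ (15 * JN (n₀ + i)) - 1) := by
    intro i
    have := hK1 i
    rwa [childs, Finset.mem_Ico] at this
  have hl_mono : Monotone l := by
    apply monotone_nat_of_le_succ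
    intro i
    have h := (hIco i).1
    have hD := hpos (15 * JN (n₀ + i))
    have hJ := hpos (JN (n₀ + i))
    have hcast : ((2:ℝ) ^ (15 * JN (n₀ + i)) * ((K i).1 : ℝ)) ≤ ((K (i+1)).1 : ℝ) := by
      exact_mod_cast h
    show ((K i).1 : ℝ) / 2 ^ JN (n₀ + i) ≤ ((K (i+1)).1 : ℝ) / 2 ^ JN (n₀ + i + 1)
    have heq : ((K i).1 : ℝ) / 2 ^ JN (n₀ + i)
        = (2 ^ (15 * JN (n₀ + i)) * ((K i).1 : ℝ)) / 2 ^ JN (n₀ + i + 1) := by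
      rw [hpow_succ (n₀ + i)]
      field_simp
    rw [heq]
    gcongr
  have hR_step : ∀ i, R (i+1) ≤ R i - 1 / 2 ^ JN (n₀ + i + 1) := by
    intro i
    have h := (hIco i).2
    have hJ := hpos (JN (n₀ + i))
    have hJ' := hpos (JN (n₀ + i + 1))
    have hint : (K (i+1)).1 + 1 ≤ 2 ^ (15 * JN (n₀ + i)) * (K i).1 + 2 ^ (15 * JN (n₀ + i)) - 1 := by
      omega
    have hcast : ((K (i+1)).1 : ℝ) + 1 ≤ 2 ^ (15 * JN (n₀ + i)) * (((K i).1 : ℝ) + 1) - 1 := by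
      have h2 : (((K (i+1)).1 + 1 : ℤ) : ℝ)
          ≤ ((2 ^ (15 * JN (n₀ + i)) * (K i).1 + 2 ^ (15 * JN (n₀ + i)) - 1 : ℤ) : ℝ) := by
        exact_mod_cast hint
      push_cast at h2
      linarith
    show (((K (i+1)).1 : ℝ) + 1) / 2 ^ JN (n₀ + i + 1)
        ≤ (((K i).1 : ℝ) + 1) / 2 ^ JN (n₀ + i) - 1 / 2 ^ JN (n₀ + i + 1)
    have heq : (((K i).1 : ℝ) + 1) / 2 ^ JN (n₀ + i) - 1 / 2 ^ JN (n₀ + i + 1)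
        = (2 ^ (15 * JN (n₀ + i)) * (((K i).1 : ℝ) + 1) - 1) / 2 ^ JN (n₀ + i + 1) := by
      rw [hpow_succ (n₀ + i)]
      field_simp
    rw [heq]
    gcongr
  have hlR : ∀ i, l i < R i := by
    intro i
    show ((K i).1 : ℝ) / 2 ^ JN (n₀ + i) < (((K i).1 : ℝ) + 1) / 2 ^ JN (n₀ + i)
    gcongr
    linarith
  have hR_anti : Antitone R := by
    apply antitone_nat_of_succ_le
    intro i
    have h1 := hR_step i
    have h2 := hpos (JN (n₀ + i + 1))
    have : (0:ℝ) < 1 / 2 ^ JN (n₀ + i + 1) := by positivity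
    linarith
  have hbdd : BddAbove (Set.range l) := by
    refine ⟨R 0, ?_⟩
    rintro x ⟨p, rfl⟩
    exact le_trans (hlR p).le (hR_anti (Nat.zero_le p))
  set t : ℝ := ⨆ i, l i with htdef
  have hlt : ∀ i, l i ≤ t := fun i => le_ciSup hbdd i
  have htR' : ∀ i, t ≤ R i - 1 / 2 ^ JN (n₀ + i + 1) := by
    intro i
    have hup : ∀ p, l p ≤ R (i+1) := by
      intro p
      rcases le_total p (i+1) with hp | hp
      · exact le_trans (hl_mono hp) (hlR (i+1)).le
      · exact le_trans (hlR p).le (hR_anti hp)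
    calc t ≤ R (i+1) := ciSup_le hup
      _ ≤ R i - 1 / 2 ^ JN (n₀ + i + 1) := hR_step i
  have htR : ∀ i, t < R i := by
    intro i
    have h2 : (0:ℝ) < 1 / 2 ^ JN (n₀ + i + 1) := by positivity
    have := htR' i
    linarith
  have hfloor : ∀ i, ⌊(2:ℝ) ^ JN (n₀ + i) * t⌋ = (K i).1 := by
    intro i
    rw [Int.floor_eq_iff]
    constructor
    · have h1 := hlt i
      have h2 : ((K i).1 : ℝ) / 2 ^ JN (n₀ + i) ≤ t := h1
      rw [div_le_iff₀ (hpos _)] at h2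
      linarith [h2]
    · have h1 := htR i
      have h2 : t < (((K i).1 : ℝ) + 1) / 2 ^ JN (n₀ + i) := h1
      rw [lt_div_iff₀ (hpos _)] at h2
      push_cast
      nlinarith [hpos (JN (n₀ + i))]
  have hta : a < t := by
    have h0 : a < l 0 := by
      show a < ((K 0).1 : ℝ) / 2 ^ J₀
      rw [lt_div_iff₀ (hpos _)]
      have : ((K 0).1 : ℝ) = (k₀ : ℝ) := rfl
      rw [this]
      linarith [hk₀a]
    exact lt_of_lt_of_le h0 (hlt 0)
  have htb : t < b := by
    have h0 : R 0 ≤ b := by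
      show (((K 0).1 : ℝ) + 1) / 2 ^ J₀ ≤ b
      rw [div_le_iff₀ (hpos _)]
      have : ((K 0).1 : ℝ) = (k₀ : ℝ) := rfl
      rw [this]
      linarith [hk₀b]
    exact lt_of_lt_of_le (htR 0) h0
  refine ⟨t, ⟨hta, htb⟩, ?_⟩
  have hfreq : ∃ᶠ j in atTop, (1:ℝ≥0∞) ≤
      ENNReal.ofReal (|g (j, ⌊(2:ℝ) ^ j * t⌋)| / Real.sqrt (j:ℝ)) := by
    rw [frequently_atTop]
    intro m
    refine ⟨JN (n₀ + (m + 1)), ?_, ?_⟩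
    · have h1 := JN_ge (n₀ + (m + 1))
      omega
    · rw [hfloor (m + 1)]
      have h1 := hK2 m
      have hj1 : (1:ℝ) ≤ ((JN (n₀ + (m + 1)) : ℕ) : ℝ) := by
        have := JN_ge (n₀ + (m + 1))
        exact_mod_cast Nat.one_le_iff_ne_zero.2 (by omega)
      have hsq : 0 < Real.sqrt ((JN (n₀ + (m + 1)) : ℕ) : ℝ) := Real.sqrt_pos.2 (by linarith)
      apply ENNReal.one_le_ofReal.2
      rw [le_div_iff₀ hsq]
      rw [one_mul]
      calc Real.sqrt ((JN (n₀ + (m + 1)) : ℕ) : ℝ) ≤ g (JN (n₀ + (m + 1)), (K (m+1)).1) := h1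
        _ ≤ |g (JN (n₀ + (m + 1)), (K (m+1)).1)| := le_abs_self _
  have hle := le_limsup_of_frequently_le hfreq
  exact lt_of_lt_of_le (by norm_num) hle

variable {Ω : Type*} [MeasurableSpace Ω] (P : Measure Ω) [IsProbabilityMeasure P]
  (ξ : ℕ × ℤ → Ω → ℝ)

def A (p : ℕ × ℤ) : Set Ω := ξ p ⁻¹' Set.Ici (Real.sqrt p.1)

def Bev (n : ℕ) : Set Ω := ⋂ k ∈ parents n, ⋃ k' ∈ childs n k, A ξ (JN (n+1), k')

variable (hmeas : ∀ p, Measurable (ξ p))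
  (hindep : iIndepFun ξ P)
  (hgauss : ∀ p, Measure.map (ξ p) P = gaussianReal 0 1)

section
include hmeas hgauss

lemma P_A_compl (p : ℕ × ℤ) :
    P ((A ξ p)ᶜ) = 1 - gaussianReal 0 1 (Set.Ici (Real.sqrt p.1)) := by
  rw [prob_compl_eq_one_sub (s := A ξ p) (hmeas p measurableSet_Ici)]
  congr 1
  rw [A, ← Measure.map_apply (hmeas p) measurableSet_Ici, hgauss]

end

include hmeas hindep hgauss in
lemma P_inter_compl (j : ℕ) (F : Finset ℤ) :
    P (⋂ k ∈ F, (A ξ (j, k))ᶜ)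
      = (1 - gaussianReal 0 1 (Set.Ici (Real.sqrt j))) ^ F.card := by
  classical
  let emb : ℤ ↪ ℕ × ℤ := ⟨fun k => (j, k), fun a b h => (Prod.mk.injEq _ _ _ _ ▸ h).2⟩
  have hset : (⋂ k ∈ F, (A ξ (j, k))ᶜ) = ⋂ p ∈ F.map emb, (A ξ p)ᶜ := by
    ext ω
    simp [Finset.mem_map, emb]
    exact Iff.rfl
  rw [hset]
  rw [hindep.meas_biInter (s := fun p => (A ξ p)ᶜ)
    (fun p _ => ⟨(Set.Ici (Real.sqrt p.1))ᶜ, measurableSet_Ici.compl, rfl⟩)]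
  rw [Finset.prod_map]
  have : ∀ k ∈ F, P ((A ξ (emb k))ᶜ) = 1 - gaussianReal 0 1 (Set.Ici (Real.sqrt j)) := by
    intro k _
    exact P_A_compl P ξ hmeas hgauss (j, k)
  rw [Finset.prod_congr rfl this, Finset.prod_const]


lemma one_sub_q_le (j : ℕ) :
    1 - gaussianReal 0 1 (Set.Ici (Real.sqrt j))
      ≤ ENNReal.ofReal (Real.exp (-(Real.exp (-(Real.sqrt (j:ℝ) + 1) ^ 2 / 2 - 1)))) := by
  set e := Real.exp (-(Real.sqrt (j:ℝ) + 1) ^ 2 / 2 - 1) with he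
  have h1 : ENNReal.ofReal e ≤ gaussianReal 0 1 (Set.Ici (Real.sqrt j)) :=
    gauss_tail (Real.sqrt_nonneg _)
  have h2 : (1:ℝ≥0∞) - gaussianReal 0 1 (Set.Ici (Real.sqrt j)) ≤ 1 - ENNReal.ofReal e :=
    tsub_le_tsub_left h1 1
  have h3 : (1:ℝ≥0∞) - ENNReal.ofReal e = ENNReal.ofReal (1 - e) := by
    rw [ENNReal.ofReal_sub _ (Real.exp_nonneg _), ENNReal.ofReal_one]
  have h4 : (1:ℝ) - e ≤ Real.exp (-e) := by
    have := Real.add_one_le_exp (-e)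
    linarith
  calc 1 - gaussianReal 0 1 (Set.Ici (Real.sqrt j)) ≤ 1 - ENNReal.ofReal e := h2
    _ = ENNReal.ofReal (1 - e) := h3
    _ ≤ ENNReal.ofReal (Real.exp (-e)) := ENNReal.ofReal_le_ofReal h4

include hmeas hindep hgauss in
lemma P_Bev_compl_le (n : ℕ) :
    P ((Bev ξ n)ᶜ) ≤ (parents n).card *
      ENNReal.ofReal (Real.exp (-(((2 ^ (15 * JN n) - 1 : ℕ) : ℝ) *
        Real.exp (-(Real.sqrt (JN (n+1) : ℝ) + 1) ^ 2 / 2 - 1)))) := by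
  classical
  set e := Real.exp (-(Real.sqrt (JN (n+1) : ℝ) + 1) ^ 2 / 2 - 1) with he
  set M : ℕ := 2 ^ (15 * JN n) - 1 with hM
  have hB : (Bev ξ n)ᶜ = ⋃ k ∈ parents n, ⋂ k' ∈ childs n k, (A ξ (JN (n+1), k'))ᶜ := by
    rw [Bev, Set.compl_iInter₂]
    simp [Set.compl_iUnion]
  rw [hB]
  refine le_trans (measure_biUnion_finset_le _ _) ?_
  have hterm : ∀ k ∈ parents n,
      P (⋂ k' ∈ childs n k, (A ξ (JN (n+1), k'))ᶜ)
        ≤ ENNReal.ofReal (Real.exp (-((M:ℝ) * e))) := by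
    intro k _
    rw [P_inter_compl P ξ hmeas hindep hgauss (JN (n+1)) (childs n k), card_childs]
    calc (1 - gaussianReal 0 1 (Set.Ici (Real.sqrt (JN (n+1))))) ^ M
        ≤ (ENNReal.ofReal (Real.exp (-e))) ^ M :=
          pow_le_pow_left' (one_sub_q_le (JN (n+1))) M
      _ = ENNReal.ofReal ((Real.exp (-e)) ^ M) := by
          rw [ENNReal.ofReal_pow (Real.exp_nonneg _)]
      _ = ENNReal.ofReal (Real.exp (-((M:ℝ) * e))) := by
          rw [← Real.exp_nat_mul]
          ring_nf
  refine le_trans (Finset.sum_le_sum hterm) ?_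
  rw [Finset.sum_const, nsmul_eq_mul]


end Stmt12

open Stmt12

theorem stmt_12 {Ω : Type*} [MeasurableSpace Ω] (P : Measure Ω) [IsProbabilityMeasure P]
    (ξ : ℕ × ℤ → Ω → ℝ)
    (hmeas : ∀ p, Measurable (ξ p))
    (hindep : iIndepFun ξ P)
    (hgauss : ∀ p, Measure.map (ξ p) P = gaussianReal 0 1) :
    ∀ᵐ ω ∂P, ∀ a b : ℝ, a < b → ∃ t ∈ Set.Ioo a b,
      0 < Filter.limsup (fun j : ℕ =>
        ENNReal.ofReal (|ξ (j, ⌊(2 : ℝ) ^ j * t⌋) ω| / Real.sqrt (j : ℝ)))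
        Filter.atTop := by
  -- summability of complements
  have hterm : ∀ n, P ((Bev ξ n)ᶜ) ≤ ENNReal.ofReal ((1/2) ^ n) := by
    intro n
    refine le_trans (P_Bev_compl_le P ξ hmeas hindep hgauss n) ?_
    rw [card_parents]
    set c : ℕ := 2 * (n * 2 ^ JN n) + 1
    set x : ℝ := Real.exp (-(((2 ^ (15 * JN n) - 1 : ℕ) : ℝ) *
        Real.exp (-(Real.sqrt ((JN (n+1) : ℕ) : ℝ) + 1) ^ 2 / 2 - 1)))
    have hx : (0:ℝ) ≤ x := Real.exp_nonneg _
    have h1 : (c : ℝ≥0∞) * ENNReal.ofReal x = ENNReal.ofReal ((c : ℝ) * x) := by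
      rw [ENNReal.ofReal_mul (by positivity)]
      congr 1
      rw [ENNReal.ofReal_natCast]
    rw [h1]
    exact ENNReal.ofReal_le_ofReal (term_bound n)
  have hsum : ∑' n, P ((Bev ξ n)ᶜ) ≠ ∞ := by
    refine ne_top_of_le_ne_top ?_ (ENNReal.tsum_le_tsum hterm)
    have h2 : ∀ n : ℕ, ENNReal.ofReal ((1/2 : ℝ) ^ n) = (ENNReal.ofReal (1/2)) ^ n := by
      intro n
      rw [ENNReal.ofReal_pow (by norm_num)]
    simp_rw [h2]
    rw [ENNReal.tsum_geometric]
    rw [Ne, ENNReal.inv_eq_top, tsub_eq_zero_iff_le]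
    intro hcontra
    have : ENNReal.ofReal (1/2 : ℝ) < 1 := by
      rw [ENNReal.ofReal_lt_one]
      norm_num
    exact absurd hcontra (not_le.2 this)
  have hBC : P (limsup (fun n => (Bev ξ n)ᶜ) atTop) = 0 :=
    measure_limsup_atTop_eq_zero hsum
  have hae : ∀ᵐ ω ∂P, ∀ᶠ n in atTop, ω ∈ Bev ξ n := by
    have hmem : ∀ᵐ ω ∂P, ω ∉ limsup (fun n => (Bev ξ n)ᶜ) atTop := by
      rw [ae_iff]
      simpa using hBC
    filter_upwards [hmem] with ω hω
    rw [mem_limsup_iff_frequently_mem] at hω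
    rw [Filter.not_frequently] at hω
    filter_upwards [hω] with n hn
    simpa using hn
  filter_upwards [hae] with ω hω
  intro a b hab
  obtain ⟨N, hN⟩ := eventually_atTop.1 hω
  refine det (fun p => ξ p ω) N ?_ a b hab
  intro n hn k hk
  have hB := hN n hn
  rw [Bev] at hB
  have h1 := Set.mem_iInter₂.1 hB k hk
  obtain ⟨k', hk', hmem⟩ := Set.mem_iUnion₂.1 h1
  exact ⟨k', hk', hmem⟩
end
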